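/- With a_n = ⌊log n / log 2⌋, b_n = ⌊log n / log 2⌋ + 2{n/2}, and c_n = d_n = ⌊n/2⌋ − ⌊log n / log 2⌋, one has log C(n; a_n, b_n, c_n, d_n) = n log 2 + 2 log² n / log 2 + o(log² n) as n → ∞. -/

import Mathlib

/-- `a_n = ⌊log n / log 2⌋` (integer part; `log` is the natural logarithm). -/
noncomputable def aSeq (n : ℕ) : ℕ := ⌊Real.log n / Real.log 2⌋₊

/-- `b_n = ⌊log n / log 2⌋ + 2{n/2}`, where `2{n/2}` is `0` if `n` is even and `1` if odd. -/
noncomputable def bSeq (n : ℕ) : ℕ := aSeq n + n % 2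

/-- `c_n = d_n = ⌊n/2⌋ − ⌊log n / log 2⌋`. -/
noncomputable def cSeq (n : ℕ) : ℕ := n / 2 - aSeq n

/-- The multinomial coefficient `C(n; a_n, b_n, c_n, d_n) = n!/(a_n! b_n! c_n! d_n!)`
(the subtraction `c_n = ⌊n/2⌋ − a_n` is exact and `a_n + b_n + c_n + d_n = n`). -/
noncomputable def multinomialSeq (n : ℕ) : ℝ :=
  (n.factorial : ℝ) /
    ((aSeq n).factorial * (bSeq n).factorial * (cSeq n).factorial * (cSeq n).factorial)

/-- The singled-out term
`t_n = C(n; a_n,b_n,c_n,d_n) (1/2)^{a_n+c_n} (1/2)^{b_n+d_n} (1/2)^{a_n b_n}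
       (1 − 2^{−a_n})^{d_n} (1 − 2^{−b_n})^{c_n}` with `d_n = c_n`. -/
noncomputable def tSeq (n : ℕ) : ℝ :=
  multinomialSeq n *
    ((1 / 2 : ℝ) ^ (aSeq n + cSeq n) * (1 / 2 : ℝ) ^ (bSeq n + cSeq n) *
      (1 / 2 : ℝ) ^ (aSeq n * bSeq n) *
      (1 - (2 : ℝ) ^ (-(aSeq n : ℤ))) ^ cSeq n *
      (1 - (2 : ℝ) ^ (-(bSeq n : ℤ))) ^ cSeq n)

open Filter Real Asymptotics Topology

noncomputable def Lf (n : ℕ) : ℝ := Real.log n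

lemma hL : Tendsto Lf atTop atTop :=
  Real.tendsto_log_atTop.comp tendsto_natCast_atTop_atTop

lemma hlog2_pos : (0:ℝ) < Real.log 2 := Real.log_pos one_lt_two

lemma hlog2_half : (1/2 : ℝ) ≤ Real.log 2 := by
  have := Real.log_two_gt_d9; linarith

lemma hlog2_lt : Real.log 2 < 1 := by
  have := Real.log_two_lt_d9; linarith

lemma ha_top : Tendsto aSeq atTop atTop :=
  (tendsto_nat_floor_atTop (α := ℝ)).comp (hL.atTop_div_const hlog2_pos)

lemma hb_top : Tendsto bSeq atTop atTop :=
  tendsto_atTop_mono (fun n => Nat.le_add_right _ _) ha_top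

lemma evA1 : ∀ᶠ n in atTop, 1 ≤ aSeq n := ha_top.eventually_ge_atTop 1

lemma evA8 : ∀ᶠ n in atTop, 8 * aSeq n + 16 ≤ n := by
  have h := (Real.isLittleO_log_id_atTop.comp_tendsto
    (tendsto_natCast_atTop_atTop (R := ℝ))).def (by norm_num : (0:ℝ) < 1/32)
  filter_upwards [h, eventually_ge_atTop 32] with n hn h32
  have hn32 : (32:ℝ) ≤ n := by exact_mod_cast h32
  have hn0 : (1:ℝ) ≤ n := by linarith
  have hLnn : 0 ≤ Lf n := Real.log_nonneg hn0
  have hlogn : Lf n ≤ n / 32 := by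
    have h' : |Real.log n| ≤ 1/32 * |(n:ℝ)| := by simpa [Real.norm_eq_abs] using hn
    calc Lf n ≤ |Real.log n| := le_abs_self _
    _ ≤ 1/32 * |(n:ℝ)| := h'
    _ = |(n:ℝ)| / 32 := by ring
    _ = (n:ℝ) / 32 := by rw [abs_of_nonneg (by linarith : (0:ℝ) ≤ (n:ℝ))]
  have hA : (aSeq n : ℝ) ≤ 2 * Lf n := by
    have h1 : (aSeq n : ℝ) ≤ Lf n / Real.log 2 := Nat.floor_le (by positivity)
    have h2 : Lf n / Real.log 2 ≤ 2 * Lf n := by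
      rw [div_le_iff₀ hlog2_pos]; nlinarith [hlog2_half]
    linarith
  have : (8 * aSeq n + 16 : ℝ) ≤ n := by push_cast; nlinarith
  exact_mod_cast this

lemma hc_top : Tendsto cSeq atTop atTop := by
  have h8 : Tendsto (fun n : ℕ => n / 8) atTop atTop :=
    tendsto_atTop_atTop.2 fun b => ⟨8*b, fun n hn => by omega⟩
  refine tendsto_atTop_mono' atTop ?_ h8
  filter_upwards [evA8] with n hn
  simp only [cSeq]; omega

lemma hL2 : Tendsto (fun n => Lf n ^ 2) atTop atTop :=
  hL.atTop_mul_atTop₀ hL |>.congr (by intro n; rw [sq])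

lemma one_lo : (fun _ : ℕ => (1:ℝ)) =o[atTop] (fun n => Lf n ^ 2) := by
  rw [isLittleO_iff]
  intro c hc
  filter_upwards [hL2.eventually_ge_atTop (1/c)] with n h
  simp only [Real.norm_eq_abs]
  rw [abs_one, abs_of_nonneg (by positivity : (0:ℝ) ≤ Lf n ^ 2)]
  rw [div_le_iff₀ hc] at h
  linarith

lemma log_lo : (fun n : ℕ => Lf n) =o[atTop] (fun n => Lf n ^ 2) := by
  rw [isLittleO_iff]
  intro c hc
  filter_upwards [hL.eventually_ge_atTop (1/c), hL.eventually_ge_atTop 0] with n h h0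
  simp only [Real.norm_eq_abs]
  rw [abs_of_nonneg h0, abs_of_nonneg (by positivity : (0:ℝ) ≤ Lf n ^ 2), sq]
  rw [div_le_iff₀ hc] at h
  nlinarith

lemma loglog_lo : (fun n : ℕ => Lf n * Real.log (Lf n)) =o[atTop] (fun n => Lf n ^ 2) := by
  have h1 : (fun n : ℕ => Real.log (Lf n)) =o[atTop] (fun n => Lf n) :=
    Real.isLittleO_log_id_atTop.comp_tendsto hL
  have := (isBigO_refl Lf atTop).mul_isLittleO h1
  exact this.congr (fun _ => rfl) (fun n => (sq (Lf n)).symm)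

lemma lo_of_le_log {f : ℕ → ℝ} {C : ℝ} (h : ∀ᶠ n in atTop, |f n| ≤ C * Lf n) :
    f =o[atTop] (fun n => Lf n ^ 2) := by
  refine IsBigO.trans_isLittleO ?_ log_lo
  rw [isBigO_iff]
  refine ⟨C, ?_⟩
  filter_upwards [h, hL.eventually_ge_atTop 0] with n hn h0
  simp only [Real.norm_eq_abs]
  rwa [abs_of_nonneg h0]

lemma lo_of_le_loglog {f : ℕ → ℝ} {C : ℝ}
    (h : ∀ᶠ n in atTop, |f n| ≤ C * (Lf n * Real.log (Lf n))) :
    f =o[atTop] (fun n => Lf n ^ 2) := by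
  refine IsBigO.trans_isLittleO ?_ loglog_lo
  rw [isBigO_iff]
  refine ⟨C, ?_⟩
  filter_upwards [h, hL.eventually_ge_atTop 0,
    (Real.tendsto_log_atTop.comp hL).eventually_ge_atTop 0] with n hn h0 h1
  simp only [Real.norm_eq_abs]
  rwa [abs_of_nonneg (mul_nonneg h0 (show (0:ℝ) ≤ Real.log (Lf n) from h1))]

noncomputable def sl (k : ℕ) : ℝ := Real.log (Stirling.stirlingSeq k)

lemma log_factorial {k : ℕ} (hk : 1 ≤ k) :
    Real.log (k.factorial) = k * Real.log k - k + (1/2) * Real.log (2*k) + sl k := by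
  have := Stirling.log_stirlingSeq_formula k
  have hk0 : (0:ℝ) < k := by exact_mod_cast hk
  rw [Real.log_div (by positivity) (by positivity), Real.log_exp] at this
  unfold sl
  push_cast
  linarith

lemma sl_tendsto : Tendsto sl atTop (𝓝 (Real.log (Real.sqrt Real.pi))) :=
  Stirling.tendsto_stirlingSeq_sqrt_pi.log (by positivity)

noncomputable def F1 (n : ℕ) : ℝ := sl n - sl (aSeq n) - sl (bSeq n) - 2 * sl (cSeq n)
noncomputable def F2 (n : ℕ) : ℝ :=
  (1/2) * (Real.log (2*(n:ℝ)) - Real.log (2*(aSeq n:ℝ)) - Real.log (2*(bSeq n:ℝ))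
    - 2 * Real.log (2*(cSeq n:ℝ)))
noncomputable def F3 (n : ℕ) : ℝ :=
  -((aSeq n:ℝ) * Real.log (aSeq n) + (bSeq n:ℝ) * Real.log (bSeq n))
noncomputable def F4 (n : ℕ) : ℝ :=
  ((n:ℝ) - 2*(cSeq n:ℝ)) * (Lf n - Real.log 2) - 2 * Lf n ^ 2 / Real.log 2
noncomputable def F5 (n : ℕ) : ℝ := 2*(cSeq n:ℝ) * (Lf n - Real.log (2*(cSeq n:ℝ)))

lemma F1_lo : F1 =o[atTop] (fun n => Lf n ^ 2) := by
  have t : Tendsto F1 atTop (𝓝 (Real.log (Real.sqrt Real.pi) - Real.log (Real.sqrt Real.pi)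
      - Real.log (Real.sqrt Real.pi) - 2 * Real.log (Real.sqrt Real.pi))) :=
    ((sl_tendsto.sub (sl_tendsto.comp ha_top)).sub (sl_tendsto.comp hb_top)).sub
      ((sl_tendsto.comp hc_top).const_mul 2)
  exact (t.isBigO_one ℝ).trans_isLittleO one_lo

lemma aSeq_le {n : ℕ} (hn : 1 ≤ n) : (aSeq n : ℝ) ≤ 2 * Lf n := by
  have hn1 : (1:ℝ) ≤ n := by exact_mod_cast hn
  have hLnn : 0 ≤ Lf n := Real.log_nonneg hn1
  have h1 : (aSeq n : ℝ) ≤ Lf n / Real.log 2 := Nat.floor_le (by positivity)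
  have h2 : Lf n / Real.log 2 ≤ 2 * Lf n := by
    rw [div_le_iff₀ hlog2_pos]; nlinarith [hlog2_half]
  linarith

lemma F2_lo : F2 =o[atTop] (fun n => Lf n ^ 2) := by
  apply lo_of_le_log (C := 4)
  filter_upwards [evA1, evA8, hL.eventually_ge_atTop 1] with n e1 e2 e3
  have hB1 : 1 ≤ bSeq n := le_trans e1 (Nat.le_add_right _ _)
  have hC1 : 1 ≤ cSeq n := by simp only [cSeq]; omega
  have hBn : bSeq n ≤ n := by simp only [bSeq]; omega
  have hC2 : 2 * cSeq n ≤ n := by simp only [cSeq]; omega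
  have hn16 : 16 ≤ n := by omega
  have hA1R : (1:ℝ) ≤ (aSeq n:ℝ) := by exact_mod_cast e1
  have hB1R : (1:ℝ) ≤ (bSeq n:ℝ) := by exact_mod_cast hB1
  have hC1R : (1:ℝ) ≤ (cSeq n:ℝ) := by exact_mod_cast hC1
  have hAnR : (aSeq n:ℝ) ≤ n := by exact_mod_cast (by omega : aSeq n ≤ n)
  have hBnR : (bSeq n:ℝ) ≤ n := by exact_mod_cast hBn
  have hCnR : 2*(cSeq n:ℝ) ≤ n := by exact_mod_cast hC2
  have hnR : (1:ℝ) ≤ n := by exact_mod_cast (by omega : 1 ≤ n)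
  have l1 : Real.log (2*(n:ℝ)) = Real.log 2 + Lf n :=
    Real.log_mul two_ne_zero (by positivity)
  have b2 : Real.log (2*(aSeq n:ℝ)) ≤ Real.log (2*(n:ℝ)) :=
    Real.log_le_log (by positivity) (by linarith)
  have b3 : Real.log (2*(bSeq n:ℝ)) ≤ Real.log (2*(n:ℝ)) :=
    Real.log_le_log (by positivity) (by linarith)
  have b4 : Real.log (2*(cSeq n:ℝ)) ≤ Real.log (2*(n:ℝ)) :=
    Real.log_le_log (by positivity) (by linarith)
  have p2 : 0 ≤ Real.log (2*(aSeq n:ℝ)) := Real.log_nonneg (by linarith)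
  have p3 : 0 ≤ Real.log (2*(bSeq n:ℝ)) := Real.log_nonneg (by linarith)
  have p4 : 0 ≤ Real.log (2*(cSeq n:ℝ)) := Real.log_nonneg (by linarith)
  have hlog2lt := hlog2_lt
  have hlog2pos := hlog2_pos
  rw [F2, abs_le]
  constructor <;> linarith

lemma F3_lo : F3 =o[atTop] (fun n => Lf n ^ 2) := by
  apply lo_of_le_loglog (C := 10)
  filter_upwards [evA1, evA8, hL.eventually_ge_atTop 8] with n e1 e2 e3
  have hn1 : 1 ≤ n := by omega
  have hA2L : (aSeq n:ℝ) ≤ 2 * Lf n := aSeq_le hn1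
  have hA1R : (1:ℝ) ≤ (aSeq n:ℝ) := by exact_mod_cast e1
  have hB1R : (1:ℝ) ≤ (bSeq n:ℝ) := by
    exact_mod_cast le_trans e1 (Nat.le_add_right _ _)
  have hBr : (bSeq n:ℝ) = (aSeq n:ℝ) + ((n % 2 : ℕ):ℝ) := by
    simp only [bSeq]; push_cast; ring
  have hr1 : ((n % 2 : ℕ):ℝ) ≤ 1 := by exact_mod_cast (by omega : n % 2 ≤ 1)
  have hB3L : (bSeq n:ℝ) ≤ 3 * Lf n := by rw [hBr]; linarith
  have hLL : 0 ≤ Real.log (Lf n) := Real.log_nonneg (by linarith)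
  have hlogA : Real.log (aSeq n:ℝ) ≤ 2 * Real.log (Lf n) := by
    calc Real.log (aSeq n:ℝ) ≤ Real.log (Lf n * Lf n) :=
          Real.log_le_log (by linarith) (by nlinarith)
    _ = 2 * Real.log (Lf n) := by
        rw [Real.log_mul (by linarith) (by linarith)]; ring
  have hlogB : Real.log (bSeq n:ℝ) ≤ 2 * Real.log (Lf n) := by
    calc Real.log (bSeq n:ℝ) ≤ Real.log (Lf n * Lf n) :=
          Real.log_le_log (by linarith) (by nlinarith)
    _ = 2 * Real.log (Lf n) := by
        rw [Real.log_mul (by linarith) (by linarith)]; ring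
  have pA : 0 ≤ Real.log (aSeq n:ℝ) := Real.log_nonneg hA1R
  have pB : 0 ≤ Real.log (bSeq n:ℝ) := Real.log_nonneg hB1R
  have mA : (aSeq n:ℝ) * Real.log (aSeq n:ℝ) ≤ (2*Lf n) * (2*Real.log (Lf n)) :=
    mul_le_mul hA2L hlogA pA (by linarith)
  have mB : (bSeq n:ℝ) * Real.log (bSeq n:ℝ) ≤ (3*Lf n) * (2*Real.log (Lf n)) :=
    mul_le_mul hB3L hlogB pB (by linarith)
  have nA : 0 ≤ (aSeq n:ℝ) * Real.log (aSeq n:ℝ) := mul_nonneg (by linarith) pA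
  have nB : 0 ≤ (bSeq n:ℝ) * Real.log (bSeq n:ℝ) := mul_nonneg (by linarith) pB
  rw [F3, abs_le]
  constructor <;> nlinarith

lemma sub_cast_S {n : ℕ} (e2 : 8 * aSeq n + 16 ≤ n) :
    (n:ℝ) - 2*(cSeq n:ℝ) = 2*(aSeq n:ℝ) + ((n % 2 : ℕ):ℝ) := by
  have h : 2*cSeq n + (2*aSeq n + n % 2) = n := by simp only [cSeq]; omega
  have := congrArg (Nat.cast : ℕ → ℝ) h
  push_cast at this
  linarith

lemma F4_lo : F4 =o[atTop] (fun n => Lf n ^ 2) := by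
  apply lo_of_le_log (C := 6)
  filter_upwards [evA8, hL.eventually_ge_atTop 1] with n e2 e3
  have hq1 : (aSeq n:ℝ) ≤ Lf n / Real.log 2 := Nat.floor_le (by positivity)
  have hq2 : Lf n / Real.log 2 - 1 < (aSeq n:ℝ) := Nat.sub_one_lt_floor _
  have hqL : Lf n / Real.log 2 * Real.log 2 = Lf n :=
    div_mul_cancel₀ _ (ne_of_gt hlog2_pos)
  have hrw : 2 * Lf n ^ 2 / Real.log 2 = 2 * (Lf n / Real.log 2) * Lf n := by
    field_simp
  have hr0 : (0:ℝ) ≤ ((n % 2 : ℕ):ℝ) := by positivity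
  have hr1 : ((n % 2 : ℕ):ℝ) ≤ 1 := by exact_mod_cast (by omega : n % 2 ≤ 1)
  have hA0 : (0:ℝ) ≤ (aSeq n:ℝ) := by positivity
  have hL0 : (0:ℝ) ≤ Lf n := by linarith
  have hlog2pos := hlog2_pos
  have hlog2lt := hlog2_lt
  rw [F4, sub_cast_S e2, hrw, abs_le]
  constructor <;>
    nlinarith [mul_nonneg (sub_nonneg.mpr hq1) hL0,
      mul_nonneg (le_of_lt (by linarith : (0:ℝ) < (aSeq n:ℝ) - (Lf n / Real.log 2 - 1))) hL0,
      mul_nonneg (sub_nonneg.mpr hq1) (le_of_lt hlog2pos),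
      mul_nonneg hr0 hL0, mul_nonneg hr0 (le_of_lt hlog2pos),
      mul_le_mul_of_nonneg_right hr1 hL0,
      mul_le_of_le_one_right hr0 (le_of_lt hlog2lt)]

lemma F5_lo : F5 =o[atTop] (fun n => Lf n ^ 2) := by
  apply lo_of_le_log (C := 5)
  filter_upwards [evA8, hL.eventually_ge_atTop 1] with n e2 e3
  have hC1 : 1 ≤ cSeq n := by simp only [cSeq]; omega
  have hC2 : 2 * cSeq n ≤ n := by simp only [cSeq]; omega
  have hn1 : 1 ≤ n := by omega
  have hC1R : (1:ℝ) ≤ (cSeq n:ℝ) := by exact_mod_cast hC1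
  have hCpos : (0:ℝ) < 2*(cSeq n:ℝ) := by linarith
  have hnpos : (0:ℝ) < n := by exact_mod_cast (by omega : 0 < n)
  have hCnR : 2*(cSeq n:ℝ) ≤ n := by exact_mod_cast hC2
  have hlogle : Real.log (2*(cSeq n:ℝ)) ≤ Lf n := Real.log_le_log hCpos hCnR
  have hub : Lf n - Real.log (2*(cSeq n:ℝ)) ≤ (n:ℝ)/(2*(cSeq n:ℝ)) - 1 := by
    have h := Real.log_le_sub_one_of_pos (div_pos hnpos hCpos)
    rw [Real.log_div (ne_of_gt hnpos) (ne_of_gt hCpos)] at h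
    exact h
  have key : 2*(cSeq n:ℝ) * ((n:ℝ)/(2*(cSeq n:ℝ)) - 1) = (n:ℝ) - 2*(cSeq n:ℝ) := by
    field_simp
  have hA2L : (aSeq n:ℝ) ≤ 2 * Lf n := aSeq_le hn1
  have hr1 : ((n % 2 : ℕ):ℝ) ≤ 1 := by exact_mod_cast (by omega : n % 2 ≤ 1)
  have hupper : F5 n ≤ 5 * Lf n := by
    have h1 : F5 n ≤ 2*(cSeq n:ℝ) * ((n:ℝ)/(2*(cSeq n:ℝ)) - 1) :=
      mul_le_mul_of_nonneg_left hub (by linarith)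
    rw [key, sub_cast_S e2] at h1
    linarith
  have hlower : 0 ≤ F5 n := mul_nonneg (by linarith) (by linarith)
  rw [abs_of_nonneg hlower]
  linarith

lemma decomp : (fun n : ℕ => Real.log (multinomialSeq n) -
      ((n:ℝ) * Real.log 2 + 2 * Real.log n ^ 2 / Real.log 2))
    =ᶠ[atTop] (fun n => F1 n + F2 n + F3 n + F4 n + F5 n) := by
  filter_upwards [evA1, evA8] with n e1 e2
  have hB1 : 1 ≤ bSeq n := le_trans e1 (Nat.le_add_right _ _)
  have hC1 : 1 ≤ cSeq n := by simp only [cSeq]; omega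
  have hn1 : 1 ≤ n := by omega
  have hab : aSeq n + bSeq n + 2 * cSeq n = n := by simp only [bSeq, cSeq]; omega
  have hfa : ((aSeq n).factorial : ℝ) ≠ 0 := by
    exact_mod_cast (aSeq n).factorial_ne_zero
  have hfb : ((bSeq n).factorial : ℝ) ≠ 0 := by
    exact_mod_cast (bSeq n).factorial_ne_zero
  have hfc : ((cSeq n).factorial : ℝ) ≠ 0 := by
    exact_mod_cast (cSeq n).factorial_ne_zero
  have hfn : ((n).factorial : ℝ) ≠ 0 := by exact_mod_cast n.factorial_ne_zero
  have hlogM : Real.log (multinomialSeq n) = Real.log n.factorial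
      - Real.log (aSeq n).factorial - Real.log (bSeq n).factorial
      - 2 * Real.log (cSeq n).factorial := by
    unfold multinomialSeq
    rw [Real.log_div hfn (by positivity), Real.log_mul (by positivity) hfc,
      Real.log_mul (by positivity) hfc, Real.log_mul hfa hfb]
    ring
  have hsum : (aSeq n:ℝ) + (bSeq n:ℝ) + 2*(cSeq n:ℝ) = n := by exact_mod_cast hab
  have hlc : Real.log ((cSeq n:ℝ)) = Real.log (2*(cSeq n:ℝ)) - Real.log 2 := by
    rw [Real.log_mul two_ne_zero (by exact_mod_cast (by omega : cSeq n ≠ 0))]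
    ring
  simp only [hlogM, log_factorial hn1, log_factorial e1, log_factorial hB1,
    log_factorial hC1, F1, F2, F3, F4, F5, Lf]
  rw [hlc]
  linear_combination hsum

/-- `log C(n; a_n, b_n, c_n, d_n) = n log 2 + 2 log² n / log 2 + o(log² n)`. -/
theorem log_multinomial_asymptotic :
    (fun n : ℕ => Real.log (multinomialSeq n) -
        (n * Real.log 2 + 2 * Real.log n ^ 2 / Real.log 2))
      =o[Filter.atTop] fun n : ℕ => Real.log n ^ 2 := by
  have h := (((F1_lo.add F2_lo).add F3_lo).add F4_lo).add F5_lo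
  exact h.congr' decomp.symm EventuallyEq.rfl
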